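/- arXiv:2409.04835 — 4 statements merged into one kernel-verified Lean document; each statement's English description precedes it below -/
import Mathlib

section
/- Let K be a generalized paracomplex structure on T compatible with the generalized metric E = {X + g(X) + Θ(X)} (i.e., KE ⊆ E). Then K also preserves E^⊥ = {X - g(X) + Θ(X)}, and the induced maps K₁ = (pr_T|E) ∘ K ∘ (pr_T|E)^{-1} and K₂ = (pr_T|E^⊥) ∘ K ∘ (pr_T|E^⊥)^{-1} are paracomplex structures on T compatible with the metric g (K_i² = Id and g(K_iX,Y) + g(X,K_iY) = 0). -/
/-- If a generalized paracomplex structure `K` on `T` preserves the generalized metric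
`E = {X + g(X) + Θ(X)}`, then it also preserves `E^⊥ = {X - g(X) + Θ(X)}`, and the
induced endomorphisms `K₁`, `K₂` of `T` are paracomplex structures compatible with
the metric `g`. -/
theorem stmt14 (T : Type) [AddCommGroup T] [Module ℝ T] [FiniteDimensional ℝ T]
    (g : T ≃ₗ[ℝ] Module.Dual ℝ T) (hsym : ∀ X Y, g X Y = g Y X)
    (Θ : T →ₗ[ℝ] Module.Dual ℝ T) (halt : ∀ X Y, Θ X Y = -(Θ Y X))
    (K : T × Module.Dual ℝ T →ₗ[ℝ] T × Module.Dual ℝ T)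
    (hK2 : ∀ A, K (K A) = A)
    (hskew : ∀ A C : T × Module.Dual ℝ T,
      ((K A).2 C.1 + C.2 (K A).1) / 2 + (A.2 (K C).1 + (K C).2 A.1) / 2 = 0)
    (hcompat : ∀ X : T, ∃ Y : T, K (X, g X + Θ X) = (Y, g Y + Θ Y)) :
    (∀ X : T, ∃ Y : T, K (X, -(g X) + Θ X) = (Y, -(g Y) + Θ Y)) ∧
    (∃ K₁ K₂ : T →ₗ[ℝ] T,
      (∀ X : T, K (X, g X + Θ X) = (K₁ X, g (K₁ X) + Θ (K₁ X))) ∧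
      (∀ X : T, K (X, -(g X) + Θ X) = (K₂ X, -(g (K₂ X)) + Θ (K₂ X))) ∧
      K₁ ∘ₗ K₁ = LinearMap.id ∧ K₂ ∘ₗ K₂ = LinearMap.id ∧
      (∀ X Y : T, g (K₁ X) Y + g X (K₁ Y) = 0) ∧
      (∀ X Y : T, g (K₂ X) Y + g X (K₂ Y) = 0)) := by
  classical
  -- embeddings of T as E and E^⊥
  set e : T →ₗ[ℝ] T × Module.Dual ℝ T :=
    LinearMap.prod LinearMap.id ((g : T →ₗ[ℝ] Module.Dual ℝ T) + Θ) with he_def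
  set e' : T →ₗ[ℝ] T × Module.Dual ℝ T :=
    LinearMap.prod LinearMap.id (-(g : T →ₗ[ℝ] Module.Dual ℝ T) + Θ) with he'_def
  have he : ∀ X : T, e X = (X, g X + Θ X) := fun X => rfl
  have he' : ∀ X : T, e' X = (X, -(g X) + Θ X) := fun X => rfl
  set K₁ : T →ₗ[ℝ] T := (LinearMap.fst ℝ T (Module.Dual ℝ T)) ∘ₗ K ∘ₗ e with hK₁def
  set K₂ : T →ₗ[ℝ] T := (LinearMap.fst ℝ T (Module.Dual ℝ T)) ∘ₗ K ∘ₗ e' with hK₂def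
  have hK₁app : ∀ X : T, K₁ X = (K (X, g X + Θ X)).1 := fun X => rfl
  have hK₂app : ∀ X : T, K₂ X = (K (X, -(g X) + Θ X)).1 := fun X => rfl
  -- K preserves E
  have hKe : ∀ X : T, K (X, g X + Θ X) = (K₁ X, g (K₁ X) + Θ (K₁ X)) := by
    intro X
    obtain ⟨Y, hY⟩ := hcompat X
    have h1 : K₁ X = Y := by rw [hK₁app, hY]
    rw [h1, hY]
  -- K preserves E^⊥
  have hKe' : ∀ X : T, K (X, -(g X) + Θ X) = (K₂ X, -(g (K₂ X)) + Θ (K₂ X)) := by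
    intro X
    have hperp : ∀ Z : T,
        (K (X, -(g X) + Θ X)).2 Z + (g Z + Θ Z) ((K (X, -(g X) + Θ X)).1) = 0 := by
      intro Z
      have h := hskew (X, -(g X) + Θ X) (Z, g Z + Θ Z)
      rw [hKe Z] at h
      simp only [LinearMap.add_apply, LinearMap.neg_apply] at h ⊢
      have h1 : g X (K₁ Z) = g (K₁ Z) X := hsym _ _
      have h2 : Θ X (K₁ Z) = -(Θ (K₁ Z) X) := halt _ _
      linarith
    have hsnd : (K (X, -(g X) + Θ X)).2 = -(g (K₂ X)) + Θ (K₂ X) := by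
      ext Z
      have h := hperp Z
      simp only [LinearMap.add_apply, LinearMap.neg_apply] at h ⊢
      have h1 : g Z (K₂ X) = g (K₂ X) Z := hsym _ _
      have h2 : Θ Z (K₂ X) = -(Θ (K₂ X) Z) := halt _ _
      rw [hK₂app] at h1 h2 ⊢
      linarith
    exact Prod.ext (hK₂app X).symm hsnd
  refine ⟨fun X => ⟨K₂ X, hKe' X⟩, K₁, K₂, hKe, hKe', ?_, ?_, ?_, ?_⟩
  · ext X
    have := hK2 (X, g X + Θ X)
    rw [hKe X, hKe (K₁ X)] at this
    simpa using congrArg Prod.fst this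
  · ext X
    have := hK2 (X, -(g X) + Θ X)
    rw [hKe' X, hKe' (K₂ X)] at this
    simpa using congrArg Prod.fst this
  · intro X Y
    have h := hskew (X, g X + Θ X) (Y, g Y + Θ Y)
    rw [hKe X, hKe Y] at h
    simp only [LinearMap.add_apply] at h
    have h1 : g Y (K₁ X) = g (K₁ X) Y := hsym _ _
    have h2 : Θ Y (K₁ X) = -(Θ (K₁ X) Y) := halt _ _
    have h3 : g X (K₁ Y) = g (K₁ Y) X := hsym _ _
    have h4 : Θ X (K₁ Y) = -(Θ (K₁ Y) X) := halt _ _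
    linarith
  · intro X Y
    have h := hskew (X, -(g X) + Θ X) (Y, -(g Y) + Θ Y)
    rw [hKe' X, hKe' Y] at h
    simp only [LinearMap.add_apply, LinearMap.neg_apply] at h
    have h1 : g Y (K₂ X) = g (K₂ X) Y := hsym _ _
    have h2 : Θ Y (K₂ X) = -(Θ (K₂ X) Y) := halt _ _
    have h3 : g X (K₂ Y) = g (K₂ Y) X := hsym _ _
    have h4 : Θ X (K₂ Y) = -(Θ (K₂ Y) X) := halt _ _
    linarith
end

section
/- Let g be a nondegenerate symmetric bilinear form on T and E = {X + g(X) : X ∈ T} its graph. A generalized paracomplex structure K on T preserves E if and only if K is skew-symmetric with respect to the metric ĝ = g ⊕ g* on T ⊕ T*, where g* is the induced metric on T*. -/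
/-- A generalized paracomplex structure `K` on `T` preserves the graph
`E = {X + g(X)}` of a nondegenerate symmetric form `g` if and only if `K` is
skew-symmetric with respect to the metric `ĝ = g ⊕ g*` on `T ⊕ T*`. -/
theorem stmt15 (T : Type) [AddCommGroup T] [Module ℝ T] [FiniteDimensional ℝ T]
    (g : T ≃ₗ[ℝ] Module.Dual ℝ T) (hsym : ∀ X Y, g X Y = g Y X)
    (K : T × Module.Dual ℝ T →ₗ[ℝ] T × Module.Dual ℝ T)
    (hK2 : ∀ A, K (K A) = A)
    (hskew : ∀ A C : T × Module.Dual ℝ T,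
      ((K A).2 C.1 + C.2 (K A).1) / 2 + (A.2 (K C).1 + (K C).2 A.1) / 2 = 0) :
    let ghat : T × Module.Dual ℝ T → T × Module.Dual ℝ T → ℝ :=
      fun A C => g A.1 C.1 + A.2 (g.symm C.2)
    ((∀ X : T, ∃ Y : T, K (X, g X) = (Y, g Y)) ↔
      (∀ A C : T × Module.Dual ℝ T, ghat (K A) C + ghat A (K C) = 0)) := by
  intro ghat
  constructor
  · intro hE A C
    have lem1 : ∀ W : T, (K (W, g W)).2 = g ((K (W, g W)).1) := by
      intro W
      obtain ⟨Y, hY⟩ := hE W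
      rw [hY]
    have lem2 : ∀ W : T, (K (W, -(g W))).2 = -(g ((K (W, -(g W))).1)) := by
      intro W
      ext Z
      have h1 := hskew (W, -(g W)) (Z, g Z)
      obtain ⟨Y, hY⟩ := hE Z
      rw [hY] at h1
      simp only [LinearMap.neg_apply] at h1 ⊢
      have h2 : g Z ((K (W, -(g W))).1) = g ((K (W, -(g W))).1) Z := hsym _ _
      have h3 : g W Y = g Y W := hsym _ _
      linarith
    -- key computation lemmas
    have sy : ∀ (a : T) (w : Module.Dual ℝ T), g a (g.symm w) = w a := by
      intro a w
      rw [hsym a (g.symm w), g.apply_symm_apply]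
    have FE : ∀ (W : T) (D : T × Module.Dual ℝ T),
        ghat (K (W, g W)) D + ghat ((W, g W) : T × Module.Dual ℝ T) (K D) = 0 := by
      intro W D
      have hB := lem1 W
      have hs := hskew (W, g W) D
      simp only [ghat]
      rw [hB]
      rw [hB] at hs
      have e1 : g ((K (W, g W)).1) (g.symm D.2) = D.2 ((K (W, g W)).1) := sy _ _
      have e2 : g W (g.symm (K D).2) = (K D).2 W := sy _ _
      simp only at hs ⊢
      linarith
    have FE' : ∀ (W : T) (D : T × Module.Dual ℝ T),
        ghat (K (W, -(g W))) D + ghat ((W, -(g W)) : T × Module.Dual ℝ T) (K D) = 0 := by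
      intro W D
      have hB := lem2 W
      have hs := hskew (W, -(g W)) D
      simp only [ghat]
      rw [hB]
      rw [hB] at hs
      have e1 : g ((K (W, -(g W))).1) (g.symm D.2) = D.2 ((K (W, -(g W))).1) := sy _ _
      have e2 : g W (g.symm (K D).2) = (K D).2 W := sy _ _
      simp only [LinearMap.neg_apply] at hs ⊢
      linarith
    -- decomposition
    set u := A.1 + g.symm A.2 with hu
    set v := A.1 - g.symm A.2 with hv
    have hsum : ((u, g u) : T × Module.Dual ℝ T) + (v, -(g v)) = (2:ℝ) • A := by
      refine Prod.ext ?_ ?_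
      · simp only [Prod.fst_add, Prod.smul_fst, hu, hv]
        module
      · simp only [Prod.snd_add, Prod.smul_snd, hu, hv, map_add, map_sub,
          g.apply_symm_apply]
        module
    have h1 := FE u C
    have h2 := FE' v C
    have h2A : ghat (K ((2:ℝ) • A)) C + ghat ((2:ℝ) • A) (K C) = 0 := by
      rw [← hsum, map_add]
      simp only [ghat, Prod.fst_add, Prod.snd_add, map_add, LinearMap.add_apply]
      simp only [ghat] at h1 h2
      linarith
    rw [map_smul] at h2A
    simp only [ghat, Prod.smul_fst, Prod.smul_snd, map_smul, LinearMap.smul_apply,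
      smul_eq_mul] at h2A
    simp only [ghat]
    linarith
  · intro h X
    have sy : ∀ (a : T) (w : Module.Dual ℝ T), g a (g.symm w) = w a := by
      intro a w
      rw [hsym a (g.symm w), g.apply_symm_apply]
    have key : (K (X, g X)).2 = g ((K (X, g X)).1) := by
      ext Z
      have h1 := h (X, g X) ((Z, 0) : T × Module.Dual ℝ T)
      have h2 := hskew (X, g X) ((Z, 0) : T × Module.Dual ℝ T)
      simp only [ghat] at h1
      simp only [map_zero, LinearMap.zero_apply] at h1 h2
      have e2 : g X (g.symm (K ((Z, 0) : T × Module.Dual ℝ T)).2) =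
          (K ((Z, 0) : T × Module.Dual ℝ T)).2 X := sy _ _
      linarith
    exact ⟨(K (X, g X)).1, by rw [← key]⟩
end

section
/- Let ω be a nondegenerate alternating bilinear form on T and L a product structure (L² = Id, L ≠ ±Id) such that the symmetric bilinear form g(X,Y) = ½(ω(LX,Y) - ω(X,LY)) is nondegenerate. Define Θ(X,Y) = ½(ω(LX,Y) + ω(X,LY)). Then L is skew-symmetric with respect to g, and the generalized paracomplex structure K_ω(X+α) = ω^{-1}(α) + ω(X) preserves the generalized metric E = {X + g(X) + Θ(X) : X ∈ T}. -/
/-- Let `ω` be a nondegenerate alternating form on `T` (viewed as an isomorphism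
`T ≃ T*`) and `L` a product structure such that `g(X,Y) = ½(ω(LX,Y) - ω(X,LY))` is
nondegenerate. With `Θ(X,Y) = ½(ω(LX,Y) + ω(X,LY))`, the structure `L` is
`g`-skew-symmetric and the generalized paracomplex structure
`K_ω(X+α) = ω⁻¹(α) + ω(X)` preserves the generalized metric
`E = {X + g(X) + Θ(X)}`. -/
theorem stmt17 (T : Type) [AddCommGroup T] [Module ℝ T] [FiniteDimensional ℝ T]
    (ω : T ≃ₗ[ℝ] Module.Dual ℝ T) (hωalt : ∀ X, ω X X = 0)
    (L : T →ₗ[ℝ] T) (hL2 : L ∘ₗ L = LinearMap.id)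
    (hLne : L ≠ LinearMap.id) (hLne' : L ≠ -LinearMap.id) :
    let gm : T →ₗ[ℝ] Module.Dual ℝ T :=
      (1/2 : ℝ) • (ω.toLinearMap ∘ₗ L - L.dualMap ∘ₗ ω.toLinearMap)
    let Θm : T →ₗ[ℝ] Module.Dual ℝ T :=
      (1/2 : ℝ) • (ω.toLinearMap ∘ₗ L + L.dualMap ∘ₗ ω.toLinearMap)
    ∀ _hnd : ∀ X : T, (∀ Y : T, gm X Y = 0) → X = 0,
    (∀ X Y : T, gm (L X) Y + gm X (L Y) = 0) ∧
    (∀ X : T, ∃ Y : T,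
      ((ω.symm (gm X + Θm X), ω X) : T × Module.Dual ℝ T) = (Y, gm Y + Θm Y)) := by
  intro gm Θm _hnd
  have hLL : ∀ X : T, L (L X) = X := fun X => congrFun (congrArg DFunLike.coe hL2) X
  constructor
  · intro X Y
    simp only [gm, LinearMap.smul_apply, LinearMap.sub_apply, LinearMap.coe_comp,
      Function.comp_apply, LinearMap.dualMap_apply, LinearEquiv.coe_coe, hLL,
      Pi.smul_apply, smul_eq_mul]
    ring
  · intro X
    refine ⟨L X, ?_⟩
    have hsum : ∀ Z : T, gm Z + Θm Z = ω (L Z) := by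
      intro Z
      simp only [gm, Θm, LinearMap.smul_apply, LinearMap.sub_apply, LinearMap.add_apply,
        LinearMap.coe_comp, Function.comp_apply, LinearEquiv.coe_coe]
      ext W
      simp only [LinearMap.add_apply, LinearMap.smul_apply, LinearMap.sub_apply,
        LinearMap.dualMap_apply, smul_eq_mul]
      ring
    rw [hsum X, hsum (L X), hLL, LinearEquiv.symm_apply_apply]
end

section
/- Let P be a paracomplex structure on T skew-symmetric with respect to a nondegenerate symmetric form g, and let Θ be an alternating bilinear form on T. The generalized paracomplex structure K_P(X+α) = PX - P*α preserves the generalized metric E = {X + g(X) + Θ(X)} if and only if Θ(PX,Y) + Θ(X,PY) = 0 for all X,Y ∈ T. In particular Θ(X,Y) = g(X,PY) satisfies this condition. -/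
/-- Let `P` be a paracomplex structure on `T` skew-symmetric for a nondegenerate
symmetric form `g`, and `Θ` an alternating form. The generalized paracomplex structure
`K_P(X+α) = PX - P*α` preserves the generalized metric `E = {X + g(X) + Θ(X)}` iff
`Θ(PX,Y) + Θ(X,PY) = 0` for all `X,Y`; in particular `Θ(X,Y) = g(X,PY)` satisfies
this condition. -/
theorem stmt18 (T : Type) [AddCommGroup T] [Module ℝ T] [FiniteDimensional ℝ T]
    (g : T ≃ₗ[ℝ] Module.Dual ℝ T) (hsym : ∀ X Y, g X Y = g Y X)
    (P : T →ₗ[ℝ] T) (hP2 : P ∘ₗ P = LinearMap.id)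
    (heig : Module.finrank ℝ (LinearMap.ker (P - LinearMap.id)) =
      Module.finrank ℝ (LinearMap.ker (P + LinearMap.id)))
    (hPskew : ∀ X Y : T, g (P X) Y + g X (P Y) = 0)
    (Θ : T →ₗ[ℝ] Module.Dual ℝ T) (halt : ∀ X Y, Θ X Y = -(Θ Y X)) :
    ((∀ X : T, ∃ Y : T,
        ((P X, -(P.dualMap (g X + Θ X))) : T × Module.Dual ℝ T) = (Y, g Y + Θ Y)) ↔
      (∀ X Y : T, Θ (P X) Y + Θ X (P Y) = 0)) ∧
    (∀ X Y : T, g (P X) (P Y) + g X (P (P Y)) = 0) := by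
  refine ⟨⟨fun h X Y => ?_, fun h X => ⟨P X, ?_⟩⟩, fun X Y => hPskew X (P Y)⟩
  · obtain ⟨Z, hZ⟩ := h X
    rw [Prod.mk.injEq] at hZ
    obtain ⟨h1, h2⟩ := hZ
    subst h1
    have h3 := DFunLike.congr_fun h2 Y
    simp only [LinearMap.neg_apply, LinearMap.dualMap_apply, LinearMap.add_apply] at h3
    have h4 := hPskew X Y
    linarith
  · rw [Prod.mk.injEq]
    refine ⟨rfl, ?_⟩
    ext Y
    simp only [LinearMap.neg_apply, LinearMap.dualMap_apply, LinearMap.add_apply]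
    have h4 := hPskew X Y
    have h5 := h X Y
    linarith
end
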